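/- Let S be a factorizable Boolean sublattice whose quarks have size at most 2. Then the following are equivalent: (a) S is a UFS; (b) for each connected component C of the pairing graph G_p(S), the Boolean sublattice generated by the edge set of C (each edge {a,b} regarded as the 2-element set {a,b}) is a UFS; (c) each connected component of G_p(S) is a tree with diameter at most 3. -/

import Mathlib

open scoped ENNReal

/-- A Boolean sublattice: a set of finite subsets of `ℕ` that contains `∅` and is
closed under binary unions (ordered by inclusion, with joins given by unions). -/
def IsBSL (S : Set (Finset ℕ)) : Prop :=
  ∅ ∈ S ∧ ∀ A ∈ S, ∀ B ∈ S, A ∪ B ∈ S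

/-- A quark of `S`: a nonempty element of `S` covering `∅` in `S`, i.e. there is no
`B ∈ S` with `∅ ⊊ B ⊊ A`. -/
def IsQuark (S : Set (Finset ℕ)) (A : Finset ℕ) : Prop :=
  A ∈ S ∧ A ≠ ∅ ∧ ∀ B ∈ S, B ≠ ∅ → ¬ B ⊂ A

/-- `z` is a factorization of `X` into quarks of `S`: a finite set of quarks whose
union is `X` such that no proper subset of `z` has union `X`. -/
def IsFactorization (S : Set (Finset ℕ)) (X : Finset ℕ) (z : Finset (Finset ℕ)) : Prop :=
  (∀ A ∈ z, IsQuark S A) ∧ z.sup id = X ∧ ∀ w, w ⊂ z → w.sup id ≠ X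

/-- The set `Z(X)` of factorizations of `X` in `S`. -/
def Factorizations (S : Set (Finset ℕ)) (X : Finset ℕ) : Set (Finset (Finset ℕ)) :=
  {z | IsFactorization S X z}

/-- `S` is factorizable: every nonempty element of `S` has a factorization. -/
def Factorizable (S : Set (Finset ℕ)) : Prop :=
  ∀ X ∈ S, X ≠ ∅ → (Factorizations S X).Nonempty

/-- `S` is a unique factorization semilattice: every nonempty element of `S` has
exactly one factorization. -/
def IsUFS (S : Set (Finset ℕ)) : Prop :=
  ∀ X ∈ S, X ≠ ∅ → ∃! z, z ∈ Factorizations S X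

/-- `S` is a half-factorial semilattice: for every nonempty `X ∈ S` the set of
factorization lengths of `X` is a singleton. -/
def IsHFS (S : Set (Finset ℕ)) : Prop :=
  ∀ X ∈ S, X ≠ ∅ → (Factorizations S X).Nonempty ∧
    ∀ z ∈ Factorizations S X, ∀ z' ∈ Factorizations S X, z.card = z'.card

/-- `S` is a length-factorial semilattice: two distinct factorizations of the same
nonempty element of `S` have different cardinalities. -/
def IsLFS (S : Set (Finset ℕ)) : Prop :=
  ∀ X ∈ S, X ≠ ∅ → ∀ z ∈ Factorizations S X, ∀ z' ∈ Factorizations S X,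
    z.card = z'.card → z = z'

/-- The Boolean sublattice generated by a collection `𝒜` of finite subsets of `ℕ`:
the smallest set of finite subsets of `ℕ` containing `{∅} ∪ 𝒜` and closed under
binary unions. -/
def genBSL (𝒜 : Set (Finset ℕ)) : Set (Finset ℕ) :=
  ⋂₀ {T | IsBSL T ∧ 𝒜 ⊆ T}

/-- An isolated quark: a quark disjoint from every other quark of `S`. -/
def IsIsolatedQuark (S : Set (Finset ℕ)) (A : Finset ℕ) : Prop :=
  IsQuark S A ∧ ∀ B, IsQuark S B → B ≠ A → Disjoint A B

/-- An excess quark: a quark each of whose elements belongs to some other quark. -/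
def IsExcessQuark (S : Set (Finset ℕ)) (A : Finset ℕ) : Prop :=
  IsQuark S A ∧ ∀ j ∈ A, ∃ B, IsQuark S B ∧ B ≠ A ∧ j ∈ B

/-- The quarkic graph of `S`: vertices are the quarks of `S`, with an edge between
distinct quarks having nonempty intersection. -/
def quarkicGraph (S : Set (Finset ℕ)) : SimpleGraph {A : Finset ℕ // IsQuark S A} :=
  SimpleGraph.fromRel (fun A B => ((A : Finset ℕ) ∩ (B : Finset ℕ)).Nonempty)

/-- The vertex set `V(C)` of a connected component of the quarkic graph, as a set of
finite subsets of `ℕ`. -/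
def compVerts (S : Set (Finset ℕ)) (C : (quarkicGraph S).ConnectedComponent) :
    Set (Finset ℕ) :=
  Subtype.val '' C.supp

/-- The pairing graph of `S` (for `S` with quarks of size at most 2): vertices are `ℕ`,
with an edge between distinct `a`, `b` whenever `{a, b}` is a quark of `S`. -/
def pairingGraph (S : Set (Finset ℕ)) : SimpleGraph ℕ :=
  SimpleGraph.fromRel (fun a b => IsQuark S {a, b})

/-- The edge set of a connected component `C` of the pairing graph, each edge `{a,b}`
regarded as the 2-element subset `{a, b}` of `ℕ`. -/
def compEdgeSets (S : Set (Finset ℕ)) (C : (pairingGraph S).ConnectedComponent) :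
    Set (Finset ℕ) :=
  {A | ∃ a b : ℕ, (pairingGraph S).Adj a b ∧ a ∈ C.supp ∧ A = {a, b}}

/-- `v` has degree at least `n` in `G` (valid also for infinite graphs). -/
def DegAtLeast {V : Type*} (G : SimpleGraph V) (v : V) (n : ℕ) : Prop :=
  ∃ s : Finset V, s.card = n ∧ ∀ u ∈ s, G.Adj v u

/-- `v` has degree exactly `n` in `G`: its neighbor set is a finite set of size `n`. -/
def DegExactly {V : Type*} (G : SimpleGraph V) (v : V) (n : ℕ) : Prop :=
  ∃ s : Finset V, s.card = n ∧ ∀ u, G.Adj v u ↔ u ∈ s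

/-- A leaf: a vertex of degree exactly 1. -/
def IsLeaf {V : Type*} (G : SimpleGraph V) (v : V) : Prop := DegExactly G v 1

/-- A candy graph: a connected simple graph of diameter at most 4 that contains a
cycle of length `k` if and only if `k = 4`. -/
def IsCandy {V : Type*} (G : SimpleGraph V) : Prop :=
  G.Connected ∧
  (∀ u v : V, ∃ p : G.Walk u v, p.length ≤ 4) ∧
  (∀ k : ℕ, (∃ (v : V) (c : G.Walk v v), c.IsCycle ∧ c.length = k) ↔ k = 4)

/-- The connected component `C` of `G` contains no cycle. -/
def CompAcyclic {V : Type*} (G : SimpleGraph V) (C : G.ConnectedComponent) : Prop :=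
  ∀ v ∈ C.supp, ∀ c : G.Walk v v, ¬ c.IsCycle

/-- Every path inside the connected component `C` has length at most `d` (for a tree
component this says its diameter is at most `d`). -/
def CompDiamLe {V : Type*} (G : SimpleGraph V) (C : G.ConnectedComponent) (d : ℕ) : Prop :=
  ∀ (u v : V), u ∈ C.supp → ∀ p : G.Walk u v, p.IsPath → p.length ≤ d

/-- The connected component `C` of `G` is (as an induced subgraph) the cycle graph on
`n` vertices. -/
def CompIsCycleGraph {V : Type*} (G : SimpleGraph V) (C : G.ConnectedComponent)
    (n : ℕ) : Prop :=
  ∃ v : Fin n → V, Function.Injective v ∧ C.supp = Set.range v ∧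
    ∀ i j : Fin n, G.Adj (v i) (v j) ↔
      ((j : ℕ) = ((i : ℕ) + 1) % n ∨ (i : ℕ) = ((j : ℕ) + 1) % n)

/-- The connected component `C` of `G` is (as an induced subgraph) a candy graph:
it has diameter at most 4 and contains a cycle of length `k` iff `k = 4`. -/
def CompIsCandy {V : Type*} (G : SimpleGraph V) (C : G.ConnectedComponent) : Prop :=
  (∀ u v, u ∈ C.supp → v ∈ C.supp → ∃ p : G.Walk u v, p.length ≤ 4) ∧
  (∀ k : ℕ, (∃ v ∈ C.supp, ∃ c : G.Walk v v, c.IsCycle ∧ c.length = k) ↔ k = 4)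

/-- The set of factorization lengths `L(X)` of `X` in `S`. -/
def lengthsOf (S : Set (Finset ℕ)) (X : Finset ℕ) : Set ℕ :=
  Finset.card '' Factorizations S X

/-- The elasticity `ρ(X) = sup L(X) / min L(X)` of a nonempty element `X` of `S`,
valued in the extended nonnegative reals. -/
noncomputable def elasticityOf (S : Set (Finset ℕ)) (X : Finset ℕ) : ℝ≥0∞ :=
  (⨆ n ∈ lengthsOf S X, (n : ℝ≥0∞)) / ((sInf (lengthsOf S X) : ℕ) : ℝ≥0∞)

/-- The elasticity `ρ(S)` of a Boolean sublattice `S`. -/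
noncomputable def elasticity (S : Set (Finset ℕ)) : ℝ≥0∞ :=
  ⨆ X ∈ {X | X ∈ S ∧ X ≠ ∅}, elasticityOf S X

namespace Stmt9

open SimpleGraph Finset

lemma pair_eq_pair_iff' {a b c d : ℕ} :
    ({a, b} : Finset ℕ) = {c, d} ↔ (a = c ∧ b = d) ∨ (a = d ∧ b = c) := by
  rw [← Finset.coe_inj]
  push_cast
  exact Set.pair_eq_pair_iff

lemma pair_quark_of_adj {S : Set (Finset ℕ)} {a b : ℕ} (h : (pairingGraph S).Adj a b) :
    a ≠ b ∧ IsQuark S {a, b} := by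
  simp only [pairingGraph, SimpleGraph.fromRel_adj] at h
  refine ⟨h.1, ?_⟩
  rcases h.2 with h | h
  · exact h
  · rwa [Finset.pair_comm]

lemma adj_of_pair_quark {S : Set (Finset ℕ)} {a b : ℕ} (hne : a ≠ b) (h : IsQuark S {a, b}) :
    (pairingGraph S).Adj a b := by
  simp only [pairingGraph, SimpleGraph.fromRel_adj]
  exact ⟨hne, Or.inl h⟩

lemma sup_mem {S : Set (Finset ℕ)} (hS : IsBSL S) (z : Finset (Finset ℕ))
    (hz : ∀ A ∈ z, A ∈ S) : z.sup id ∈ S := by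
  classical
  induction z using Finset.induction with
  | empty => simpa using hS.1
  | insert A s hnm ih =>
    rw [Finset.sup_insert]
    exact hS.2 A (hz A (Finset.mem_insert_self A s)) _
      (ih fun B hB => hz B (Finset.mem_insert_of_mem hB))

lemma sup_card_le (z : Finset (Finset ℕ)) (h : ∀ A ∈ z, A.card ≤ 2) :
    (z.sup id).card ≤ 2 * z.card := by
  classical
  induction z using Finset.induction with
  | empty => simp
  | insert A s hnm ih =>
    rw [Finset.sup_insert, Finset.card_insert_of_notMem hnm]
    calc (id A ⊔ s.sup id).card ≤ A.card + (s.sup id).card := Finset.card_union_le _ _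
      _ ≤ 2 + 2 * s.card := by
          have := ih fun B hB => h B (Finset.mem_insert_of_mem hB)
          have := h A (Finset.mem_insert_self A s)
          omega
      _ = 2 * (s.card + 1) := by ring

lemma exists_min_cover (X : Finset ℕ) (F : Finset (Finset ℕ)) (hF : F.sup id = X) :
    ∃ z ⊆ F, z.sup id = X ∧ ∀ w, w ⊂ z → w.sup id ≠ X := by
  classical
  induction F using Finset.strongInduction with
  | _ F ih =>
    by_cases h : ∀ w, w ⊂ F → w.sup id ≠ X
    · exact ⟨F, subset_rfl, hF, h⟩
    · push_neg at h
      obtain ⟨w, hw, hsup⟩ := h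
      obtain ⟨z, hz1, hz2, hz3⟩ := ih w hw hsup
      exact ⟨z, hz1.trans hw.subset, hz2, hz3⟩

lemma card_le_two_cases (A : Finset ℕ) (h2 : A.card ≤ 2) (h0 : A ≠ ∅) :
    (∃ a, A = {a}) ∨ ∃ a b, a ≠ b ∧ A = {a, b} := by
  have h1 : 1 ≤ A.card := Finset.card_pos.mpr (Finset.nonempty_of_ne_empty h0)
  interval_cases h : A.card
  · exact Or.inl (Finset.card_eq_one.mp h)
  · obtain ⟨a, b, hab, rfl⟩ := Finset.card_eq_two.mp h
    exact Or.inr ⟨a, b, hab, rfl⟩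

lemma two_factorizations_not_ufs {S : Set (Finset ℕ)} {X : Finset ℕ}
    {z z' : Finset (Finset ℕ)} (hz : IsFactorization S X z) (hz' : IsFactorization S X z')
    (hne : z ≠ z') (hXS : X ∈ S) (hX : X ≠ ∅) : ¬ IsUFS S := by
  intro h
  exact hne ((h X hXS hX).unique hz hz')

end Stmt9
namespace Stmt9

lemma min_helper {X : Finset ℕ} {z : Finset (Finset ℕ)} {n : ℕ}
    (hz2 : ∀ A ∈ z, A.card ≤ 2) (hzc : z.card ≤ n) (hX : 2 * n < X.card + 2) :
    ∀ w, w ⊂ z → w.sup id ≠ X := by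
  intro w hw heq
  have hwc : w.card < z.card := Finset.card_lt_card hw
  have hle : (w.sup id).card ≤ 2 * w.card :=
    sup_card_le _ (fun A hA => hz2 A (hw.subset hA))
  rw [heq] at hle
  omega

lemma pair_card_le (a b : ℕ) : ({a, b} : Finset ℕ).card ≤ 2 :=
  le_trans (Finset.card_insert_le _ _) (by simp)

lemma pair_card (a b : ℕ) (h : a ≠ b) : ({a, b} : Finset ℕ).card = 2 := by
  rw [Finset.card_insert_of_notMem (by simp [h]), Finset.card_singleton]

lemma not_ufs_triangle {S : Set (Finset ℕ)} (hS : IsBSL S) {a b c : ℕ}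
    (hab : IsQuark S {a, b}) (hbc : IsQuark S {b, c}) (hca : IsQuark S {c, a})
    (nab : a ≠ b) (nbc : b ≠ c) (nca : c ≠ a) : ¬ IsUFS S := by
  classical
  set X : Finset ℕ := {a, b, c} with hX
  set z1 : Finset (Finset ℕ) := {({a, b} : Finset ℕ), {b, c}} with hz1
  set z2 : Finset (Finset ℕ) := {({a, b} : Finset ℕ), {c, a}} with hz2
  have hXc : X.card = 3 := by
    rw [hX, Finset.card_insert_of_notMem (by simp [nab, nca.symm]),
      Finset.card_insert_of_notMem (by simp [nbc]), Finset.card_singleton]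
  have hsup1 : z1.sup id = X := by
    rw [hz1, hX]; ext x
    simp only [Finset.sup_insert, Finset.sup_singleton, Finset.sup_eq_union, id,
      Finset.mem_union, Finset.mem_insert, Finset.mem_singleton]
    tauto
  have hsup2 : z2.sup id = X := by
    rw [hz2, hX]; ext x
    simp only [Finset.sup_insert, Finset.sup_singleton, Finset.sup_eq_union, id,
      Finset.mem_union, Finset.mem_insert, Finset.mem_singleton]
    tauto
  have hq1 : ∀ A ∈ z1, IsQuark S A := by
    intro A hA; rw [hz1] at hA
    simp only [Finset.mem_insert, Finset.mem_singleton] at hA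
    rcases hA with rfl | rfl <;> assumption
  have hq2 : ∀ A ∈ z2, IsQuark S A := by
    intro A hA; rw [hz2] at hA
    simp only [Finset.mem_insert, Finset.mem_singleton] at hA
    rcases hA with rfl | rfl <;> assumption
  have hcard1 : z1.card ≤ 2 := le_trans (Finset.card_insert_le _ _) (by simp)
  have hcard2 : z2.card ≤ 2 := le_trans (Finset.card_insert_le _ _) (by simp)
  have hf1 : IsFactorization S X z1 :=
    ⟨hq1, hsup1, min_helper (fun A hA => by
      rcases (by simpa [hz1] using hA : A = {a,b} ∨ A = {b,c}) with rfl | rfl <;>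
        exact pair_card_le _ _) hcard1 (by omega)⟩
  have hf2 : IsFactorization S X z2 :=
    ⟨hq2, hsup2, min_helper (fun A hA => by
      rcases (by simpa [hz2] using hA : A = {a,b} ∨ A = {c,a}) with rfl | rfl <;>
        exact pair_card_le _ _) hcard2 (by omega)⟩
  have hne : z1 ≠ z2 := by
    intro h
    have : ({b, c} : Finset ℕ) ∈ z2 := by
      rw [← h, hz1]; simp
    rw [hz2] at this
    simp only [Finset.mem_insert, Finset.mem_singleton] at this
    rcases this with h' | h' <;> rw [pair_eq_pair_iff'] at h' <;> tauto
  have hXS : X ∈ S := by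
    rw [← hsup1]; exact sup_mem hS _ (fun A hA => (hq1 A hA).1)
  have hX0 : X ≠ ∅ := by rw [hX]; simp
  exact two_factorizations_not_ufs hf1 hf2 hne hXS hX0

end Stmt9
set_option maxHeartbeats 1000000

namespace Stmt9

lemma not_ufs_square {S : Set (Finset ℕ)} (hS : IsBSL S) {a b c d : ℕ}
    (hab : IsQuark S {a, b}) (hbc : IsQuark S {b, c}) (hcd : IsQuark S {c, d})
    (hda : IsQuark S {d, a})
    (nab : a ≠ b) (nac : a ≠ c) (nad : a ≠ d) (nbc : b ≠ c) (nbd : b ≠ d) (ncd : c ≠ d) :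
    ¬ IsUFS S := by
  classical
  set X : Finset ℕ := {a, b, c, d} with hX
  set z1 : Finset (Finset ℕ) := {({a, b} : Finset ℕ), {c, d}} with hz1
  set z2 : Finset (Finset ℕ) := {({b, c} : Finset ℕ), {d, a}} with hz2
  have hXc : X.card = 4 := by
    rw [hX, Finset.card_insert_of_notMem (by simp [nab, nac, nad]),
      Finset.card_insert_of_notMem (by simp [nbc, nbd]),
      Finset.card_insert_of_notMem (by simp [ncd]), Finset.card_singleton]
  have hsup1 : z1.sup id = X := by
    rw [hz1, hX]; ext x
    simp only [Finset.sup_insert, Finset.sup_singleton, Finset.sup_eq_union, id,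
      Finset.mem_union, Finset.mem_insert, Finset.mem_singleton]
    tauto
  have hsup2 : z2.sup id = X := by
    rw [hz2, hX]; ext x
    simp only [Finset.sup_insert, Finset.sup_singleton, Finset.sup_eq_union, id,
      Finset.mem_union, Finset.mem_insert, Finset.mem_singleton]
    tauto
  have hq1 : ∀ A ∈ z1, IsQuark S A := by
    intro A hA
    rcases (by simpa [hz1] using hA : A = {a,b} ∨ A = {c,d}) with rfl | rfl <;> assumption
  have hq2 : ∀ A ∈ z2, IsQuark S A := by
    intro A hA
    rcases (by simpa [hz2] using hA : A = {b,c} ∨ A = {d,a}) with rfl | rfl <;> assumption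
  have hcard1 : z1.card ≤ 2 := le_trans (Finset.card_insert_le _ _) (by simp)
  have hcard2 : z2.card ≤ 2 := le_trans (Finset.card_insert_le _ _) (by simp)
  have hf1 : IsFactorization S X z1 :=
    ⟨hq1, hsup1, min_helper (fun A hA => by
      rcases (by simpa [hz1] using hA : A = {a,b} ∨ A = {c,d}) with rfl | rfl <;>
        exact pair_card_le _ _) hcard1 (by omega)⟩
  have hf2 : IsFactorization S X z2 :=
    ⟨hq2, hsup2, min_helper (fun A hA => by
      rcases (by simpa [hz2] using hA : A = {b,c} ∨ A = {d,a}) with rfl | rfl <;>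
        exact pair_card_le _ _) hcard2 (by omega)⟩
  have hne : z1 ≠ z2 := by
    intro h
    have : ({a, b} : Finset ℕ) ∈ z2 := by rw [← h, hz1]; simp
    rw [hz2] at this
    simp only [Finset.mem_insert, Finset.mem_singleton] at this
    rcases this with h' | h' <;> rw [pair_eq_pair_iff'] at h' <;> tauto
  have hXS : X ∈ S := by
    rw [← hsup1]; exact sup_mem hS _ (fun A hA => (hq1 A hA).1)
  have hX0 : X ≠ ∅ := by rw [hX]; simp
  exact two_factorizations_not_ufs hf1 hf2 hne hXS hX0

lemma not_ufs_path4 {S : Set (Finset ℕ)} (hS : IsBSL S) {a b c d e : ℕ}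
    (hab : IsQuark S {a, b}) (hbc : IsQuark S {b, c}) (hcd : IsQuark S {c, d})
    (hde : IsQuark S {d, e})
    (nab : a ≠ b) (nac : a ≠ c) (nad : a ≠ d) (nae : a ≠ e) (nbc : b ≠ c) (nbd : b ≠ d)
    (nbe : b ≠ e) (ncd : c ≠ d) (nce : c ≠ e) (nde : d ≠ e) : ¬ IsUFS S := by
  classical
  set X : Finset ℕ := {a, b, c, d, e} with hX
  set z1 : Finset (Finset ℕ) := {({a, b} : Finset ℕ), {c, d}, {d, e}} with hz1
  set z2 : Finset (Finset ℕ) := {({a, b} : Finset ℕ), {b, c}, {d, e}} with hz2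
  have hXc : X.card = 5 := by
    rw [hX, Finset.card_insert_of_notMem (by simp [nab, nac, nad, nae]),
      Finset.card_insert_of_notMem (by simp [nbc, nbd, nbe]),
      Finset.card_insert_of_notMem (by simp [ncd, nce]),
      Finset.card_insert_of_notMem (by simp [nde]), Finset.card_singleton]
  have hsup1 : z1.sup id = X := by
    rw [hz1, hX]; ext x
    simp only [Finset.sup_insert, Finset.sup_singleton, Finset.sup_eq_union, id,
      Finset.mem_union, Finset.mem_insert, Finset.mem_singleton]
    tauto
  have hsup2 : z2.sup id = X := by
    rw [hz2, hX]; ext x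
    simp only [Finset.sup_insert, Finset.sup_singleton, Finset.sup_eq_union, id,
      Finset.mem_union, Finset.mem_insert, Finset.mem_singleton]
    tauto
  have hq1 : ∀ A ∈ z1, IsQuark S A := by
    intro A hA
    rcases (by simpa [hz1] using hA : A = {a,b} ∨ A = {c,d} ∨ A = {d,e}) with rfl | rfl | rfl <;>
      assumption
  have hq2 : ∀ A ∈ z2, IsQuark S A := by
    intro A hA
    rcases (by simpa [hz2] using hA : A = {a,b} ∨ A = {b,c} ∨ A = {d,e}) with rfl | rfl | rfl <;>
      assumption
  have hcard1 : z1.card ≤ 3 :=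
    le_trans (Finset.card_insert_le _ _)
      (Nat.succ_le_succ (le_trans (Finset.card_insert_le _ _) (by simp)))
  have hcard2 : z2.card ≤ 3 :=
    le_trans (Finset.card_insert_le _ _)
      (Nat.succ_le_succ (le_trans (Finset.card_insert_le _ _) (by simp)))
  have hf1 : IsFactorization S X z1 :=
    ⟨hq1, hsup1, min_helper (fun A hA => by
      rcases (by simpa [hz1] using hA : A = {a,b} ∨ A = {c,d} ∨ A = {d,e}) with rfl | rfl | rfl <;>
        exact pair_card_le _ _) hcard1 (by omega)⟩
  have hf2 : IsFactorization S X z2 :=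
    ⟨hq2, hsup2, min_helper (fun A hA => by
      rcases (by simpa [hz2] using hA : A = {a,b} ∨ A = {b,c} ∨ A = {d,e}) with rfl | rfl | rfl <;>
        exact pair_card_le _ _) hcard2 (by omega)⟩
  have hne : z1 ≠ z2 := by
    intro h
    have : ({c, d} : Finset ℕ) ∈ z2 := by rw [← h, hz1]; simp
    rw [hz2] at this
    simp only [Finset.mem_insert, Finset.mem_singleton] at this
    rcases this with h' | h' | h' <;> rw [pair_eq_pair_iff'] at h' <;> tauto
  have hXS : X ∈ S := by
    rw [← hsup1]; exact sup_mem hS _ (fun A hA => (hq1 A hA).1)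
  have hX0 : X ≠ ∅ := by rw [hX]; simp
  exact two_factorizations_not_ufs hf1 hf2 hne hXS hX0

end Stmt9
namespace Stmt9

open SimpleGraph

lemma exists_path4 {V : Type*} {G : SimpleGraph V} {u w : V} (p : G.Walk u w) :
    p.IsPath → 4 ≤ p.length →
    ∃ a b c d e : V, G.Adj a b ∧ G.Adj b c ∧ G.Adj c d ∧ G.Adj d e ∧
      [a, b, c, d, e].Nodup := by
  induction p with
  | nil => intro _ hl; simp at hl
  | cons h q ih =>
    intro hp hl
    rcases Nat.lt_or_ge q.length 4 with h4 | h4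
    · have hq3 : q.length = 3 := by
        simp only [SimpleGraph.Walk.length_cons] at hl; omega
      cases q with
      | nil => simp at hq3
      | cons h2 q2 =>
        cases q2 with
        | nil => simp at hq3
        | cons h3 q3 =>
          cases q3 with
          | nil => simp at hq3
          | cons h4' q4 =>
            cases q4 with
            | cons h5 q5 => simp [SimpleGraph.Walk.length_cons] at hq3
            | nil =>
              refine ⟨_, _, _, _, _, h, h2, h3, h4', ?_⟩
              rw [SimpleGraph.Walk.isPath_def] at hp
              simpa [SimpleGraph.Walk.support_cons] using hp
    · exact ih hp.of_cons h4

lemma cycle_extract {V : Type*} {G : SimpleGraph V} {v : V} (c : G.Walk v v)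
    (hc : c.IsCycle) :
    (∃ a b d : V, G.Adj a b ∧ G.Adj b d ∧ G.Adj d a ∧ [a, b, d].Nodup) ∨
    (∃ a b d e : V, G.Adj a b ∧ G.Adj b d ∧ G.Adj d e ∧ G.Adj e a ∧ [a, b, d, e].Nodup) ∨
    (∃ a b d e f : V, G.Adj a b ∧ G.Adj b d ∧ G.Adj d e ∧ G.Adj e f ∧
      [a, b, d, e, f].Nodup) := by
  have h3 := hc.three_le_length
  cases c with
  | nil => simp at h3
  | cons h q =>
    have hq : q.IsPath := by
      rw [SimpleGraph.Walk.isPath_def]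
      have := hc.support_nodup
      simpa [SimpleGraph.Walk.support_cons] using this
    rcases Nat.lt_or_ge q.length 4 with h4 | h4
    · simp only [SimpleGraph.Walk.length_cons] at h3
      have : q.length = 2 ∨ q.length = 3 := by omega
      rcases this with h2 | h2
      · -- triangle
        cases q with
        | nil => simp at h2
        | cons ha qa =>
          cases qa with
          | nil => simp at h2
          | cons hb qb =>
            cases qb with
            | cons hx qx => simp [SimpleGraph.Walk.length_cons] at h2
            | nil =>
              refine Or.inl ⟨_, _, _, h, ha, hb, ?_⟩
              rw [SimpleGraph.Walk.isPath_def] at hq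
              simp only [SimpleGraph.Walk.support_cons, SimpleGraph.Walk.support_nil] at hq
              simp only [List.nodup_cons, List.mem_cons, List.mem_singleton,
                List.not_mem_nil, List.nodup_nil] at hq ⊢
              tauto
      · -- square
        cases q with
        | nil => simp at h2
        | cons ha qa =>
          cases qa with
          | nil => simp at h2
          | cons hb qb =>
            cases qb with
            | nil => simp at h2
            | cons hd qd =>
              cases qd with
              | cons hx qx => simp [SimpleGraph.Walk.length_cons] at h2
              | nil =>
                refine Or.inr (Or.inl ⟨_, _, _, _, h, ha, hb, hd, ?_⟩)
                rw [SimpleGraph.Walk.isPath_def] at hq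
                simp only [SimpleGraph.Walk.support_cons, SimpleGraph.Walk.support_nil] at hq
                simp only [List.nodup_cons, List.mem_cons, List.mem_singleton,
                  List.not_mem_nil, List.nodup_nil] at hq ⊢
                tauto
    · obtain ⟨a, b, d, e, f, h1, h2', h3', h4', h5⟩ := exists_path4 q hq h4
      exact Or.inr (Or.inr ⟨a, b, d, e, f, h1, h2', h3', h4', h5⟩)

end Stmt9
namespace Stmt9

open SimpleGraph

lemma self_mem_supp {V : Type*} {G : SimpleGraph V} (v : V) :
    v ∈ (G.connectedComponentMk v).supp := by
  rw [SimpleGraph.ConnectedComponent.mem_supp_iff]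

section Config

variable {S : Set (Finset ℕ)}
  (hcond : ∀ C : (pairingGraph S).ConnectedComponent,
    CompAcyclic (pairingGraph S) C ∧ CompDiamLe (pairingGraph S) C 3)

include hcond

lemma no_triangle {a b c : ℕ} (hab : IsQuark S {a, b}) (hbc : IsQuark S {b, c})
    (hca : IsQuark S {c, a}) (nab : a ≠ b) (nbc : b ≠ c) (nca : c ≠ a) : False := by
  set G := pairingGraph S with hG
  have h1 : G.Adj a b := adj_of_pair_quark nab hab
  have h2 : G.Adj b c := adj_of_pair_quark nbc hbc
  have h3 : G.Adj c a := adj_of_pair_quark nca hca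
  let w : G.Walk a a := Walk.cons h1 (Walk.cons h2 (Walk.cons h3 Walk.nil))
  have hw : w.IsCycle := by
    rw [SimpleGraph.Walk.isCycle_def]
    refine ⟨?_, by simp [w], ?_⟩
    · rw [SimpleGraph.Walk.isTrail_def]
      simp only [w, SimpleGraph.Walk.edges_cons, SimpleGraph.Walk.edges_nil,
        List.nodup_cons, List.mem_cons, List.not_mem_nil, List.nodup_nil, or_false,
        Sym2.eq_iff]
      tauto
    · simp only [w, SimpleGraph.Walk.support_cons, SimpleGraph.Walk.support_nil,
        List.tail_cons, List.nodup_cons, List.mem_cons, List.mem_singleton,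
        List.not_mem_nil, List.nodup_nil]
      tauto
  exact (hcond (G.connectedComponentMk a)).1 a (self_mem_supp a) w hw

lemma no_square {a b c d : ℕ} (hab : IsQuark S {a, b}) (hbc : IsQuark S {b, c})
    (hcd : IsQuark S {c, d}) (hda : IsQuark S {d, a})
    (nab : a ≠ b) (nac : a ≠ c) (nad : a ≠ d) (nbc : b ≠ c) (nbd : b ≠ d) (ncd : c ≠ d) :
    False := by
  set G := pairingGraph S with hG
  have h1 : G.Adj a b := adj_of_pair_quark nab hab
  have h2 : G.Adj b c := adj_of_pair_quark nbc hbc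
  have h3 : G.Adj c d := adj_of_pair_quark ncd hcd
  have h4 : G.Adj d a := adj_of_pair_quark (fun h => nad h.symm) hda
  let w : G.Walk a a := Walk.cons h1 (Walk.cons h2 (Walk.cons h3 (Walk.cons h4 Walk.nil)))
  have hw : w.IsCycle := by
    rw [SimpleGraph.Walk.isCycle_def]
    refine ⟨?_, by simp [w], ?_⟩
    · rw [SimpleGraph.Walk.isTrail_def]
      simp only [w, SimpleGraph.Walk.edges_cons, SimpleGraph.Walk.edges_nil,
        List.nodup_cons, List.mem_cons, List.not_mem_nil, List.nodup_nil, or_false,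
        Sym2.eq_iff]
      tauto
    · simp only [w, SimpleGraph.Walk.support_cons, SimpleGraph.Walk.support_nil,
        List.tail_cons, List.nodup_cons, List.mem_cons, List.mem_singleton,
        List.not_mem_nil, List.nodup_nil]
      tauto
  exact (hcond (G.connectedComponentMk a)).1 a (self_mem_supp a) w hw

lemma no_path4 {a b c d e : ℕ} (hab : IsQuark S {a, b}) (hbc : IsQuark S {b, c})
    (hcd : IsQuark S {c, d}) (hde : IsQuark S {d, e})
    (nab : a ≠ b) (nac : a ≠ c) (nad : a ≠ d) (nae : a ≠ e) (nbc : b ≠ c) (nbd : b ≠ d)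
    (nbe : b ≠ e) (ncd : c ≠ d) (nce : c ≠ e) (nde : d ≠ e) : False := by
  set G := pairingGraph S with hG
  have h1 : G.Adj a b := adj_of_pair_quark nab hab
  have h2 : G.Adj b c := adj_of_pair_quark nbc hbc
  have h3 : G.Adj c d := adj_of_pair_quark ncd hcd
  have h4 : G.Adj d e := adj_of_pair_quark nde hde
  let w : G.Walk a e := Walk.cons h1 (Walk.cons h2 (Walk.cons h3 (Walk.cons h4 Walk.nil)))
  have hw : w.IsPath := by
    rw [SimpleGraph.Walk.isPath_def]
    simp only [w, SimpleGraph.Walk.support_cons, SimpleGraph.Walk.support_nil,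
      List.nodup_cons, List.mem_cons, List.mem_singleton, List.not_mem_nil,
      List.nodup_nil]
    tauto
  have := (hcond (G.connectedComponentMk a)).2 a e (self_mem_supp a) w hw
  simp [w, SimpleGraph.Walk.length_cons] at this

end Config

lemma ufs_imp_cond {S : Set (Finset ℕ)} (hS : IsBSL S) (hufs : IsUFS S) :
    ∀ C : (pairingGraph S).ConnectedComponent,
      CompAcyclic (pairingGraph S) C ∧ CompDiamLe (pairingGraph S) C 3 := by
  intro C
  constructor
  · intro v hv c hc
    rcases cycle_extract c hc with ⟨a, b, d, h1, h2, h3, hnd⟩ |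
      ⟨a, b, d, e, h1, h2, h3, h4, hnd⟩ | ⟨a, b, d, e, f, h1, h2, h3, h4, hnd⟩ <;>
      simp only [List.nodup_cons, List.mem_cons, List.mem_singleton, List.not_mem_nil,
        List.nodup_nil, or_false, not_or, and_true] at hnd
    · exact not_ufs_triangle hS (pair_quark_of_adj h1).2 (pair_quark_of_adj h2).2
        (pair_quark_of_adj h3).2 hnd.1.1 hnd.2.1 (fun h => hnd.1.2 h.symm) hufs
    · exact not_ufs_square hS (pair_quark_of_adj h1).2 (pair_quark_of_adj h2).2
        (pair_quark_of_adj h3).2 (pair_quark_of_adj h4).2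
        hnd.1.1 hnd.1.2.1 hnd.1.2.2 hnd.2.1.1 hnd.2.1.2 hnd.2.2.1 hufs
    · exact not_ufs_path4 hS (pair_quark_of_adj h1).2 (pair_quark_of_adj h2).2
        (pair_quark_of_adj h3).2 (pair_quark_of_adj h4).2
        hnd.1.1 hnd.1.2.1 hnd.1.2.2.1 hnd.1.2.2.2 hnd.2.1.1 hnd.2.1.2.1 hnd.2.1.2.2
        hnd.2.2.1.1 hnd.2.2.1.2 hnd.2.2.2.1 hufs
  · intro u v hu p hp
    by_contra hlen
    push_neg at hlen
    obtain ⟨a, b, c, d, e, h1, h2, h3, h4, hnd⟩ := exists_path4 p hp (by omega)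
    simp only [List.nodup_cons, List.mem_cons, List.mem_singleton, List.not_mem_nil,
      List.nodup_nil, or_false, not_or, and_true] at hnd
    exact not_ufs_path4 hS (pair_quark_of_adj h1).2 (pair_quark_of_adj h2).2
      (pair_quark_of_adj h3).2 (pair_quark_of_adj h4).2
      hnd.1.1 hnd.1.2.1 hnd.1.2.2.1 hnd.1.2.2.2 hnd.2.1.1 hnd.2.1.2.1 hnd.2.1.2.2
      hnd.2.2.1.1 hnd.2.2.1.2 hnd.2.2.2.1 hufs

end Stmt9
namespace Stmt9

variable {S : Set (Finset ℕ)}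

lemma mem_X_of_mem {X : Finset ℕ} {z : Finset (Finset ℕ)} (hz : IsFactorization S X z)
    {A : Finset ℕ} (hA : A ∈ z) : A ⊆ X := by
  rw [← hz.2.1]
  exact Finset.le_sup (f := id) hA

lemma singleton_ssubset_pair {a p q : ℕ} (hpq : p ≠ q) (ha : a ∈ ({p, q} : Finset ℕ)) :
    ({a} : Finset ℕ) ⊂ {p, q} := by
  refine (Finset.singleton_subset_iff.mpr ha).ssubset_of_ne ?_
  intro h
  have := pair_card p q hpq
  rw [← h, Finset.card_singleton] at this
  omega

lemma singleton_forced (hq : ∀ A, IsQuark S A → A.card ≤ 2)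
    {X : Finset ℕ} {z' : Finset (Finset ℕ)} (hz' : IsFactorization S X z')
    {a : ℕ} (haq : IsQuark S {a}) (ha : a ∈ X) : ({a} : Finset ℕ) ∈ z' := by
  rw [← hz'.2.1] at ha
  obtain ⟨Q, hQ, haQ⟩ := Finset.mem_sup.mp ha
  have hQq := hz'.1 Q hQ
  rcases card_le_two_cases Q (hq Q hQq) hQq.2.1 with ⟨x, rfl⟩ | ⟨p, q, hpq, rfl⟩
  · simp only [id, Finset.mem_singleton] at haQ
    subst haQ; exact hQ
  · exact absurd (singleton_ssubset_pair hpq haQ) (hQq.2.2 {a} haq.1 (by simp))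

lemma cover_pair (hq : ∀ A, IsQuark S A → A.card ≤ 2)
    {z : Finset (Finset ℕ)} (hzq : ∀ Q ∈ z, IsQuark S Q)
    {X : Finset ℕ} (hsup : z.sup id = X)
    {a b : ℕ} (hab : IsQuark S {a, b}) (hne : a ≠ b) (ha : a ∈ X) :
    ∃ x, x ≠ a ∧ ({a, x} : Finset ℕ) ∈ z := by
  rw [← hsup] at ha
  obtain ⟨Q, hQ, haQ⟩ := Finset.mem_sup.mp ha
  have hQq := hzq Q hQ
  rcases card_le_two_cases Q (hq Q hQq) hQq.2.1 with ⟨x, rfl⟩ | ⟨p, q, hpq, rfl⟩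
  · simp only [id, Finset.mem_singleton] at haQ
    subst haQ
    exact absurd (singleton_ssubset_pair hne (by simp)) (hab.2.2 {a} hQq.1 (by simp))
  · simp only [id, Finset.mem_insert, Finset.mem_singleton] at haQ
    rcases haQ with rfl | rfl
    · exact ⟨q, hpq.symm, hQ⟩
    · exact ⟨p, hpq, by rwa [Finset.pair_comm] at hQ⟩

lemma core_priv (hq : ∀ A, IsQuark S A → A.card ≤ 2)
    (hcond : ∀ C : (pairingGraph S).ConnectedComponent,
      CompAcyclic (pairingGraph S) C ∧ CompDiamLe (pairingGraph S) C 3)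
    {X : Finset ℕ} {z z' : Finset (Finset ℕ)}
    (hz : IsFactorization S X z) (hz' : IsFactorization S X z')
    {a b x y : ℕ}
    (habz : ({a, b} : Finset ℕ) ∈ z) (haxz' : ({a, x} : Finset ℕ) ∈ z')
    (hbyz' : ({b, y} : Finset ℕ) ∈ z')
    (nab : a ≠ b) (nxa : x ≠ a) (nxb : x ≠ b) (nyb : y ≠ b) (nya : y ≠ a) (nxy : x ≠ y)
    (hpriv : ∀ Q ∈ z, a ∈ Q → Q = {a, b}) : False := by
  have hab : IsQuark S {a, b} := hz.1 _ habz
  have hax : IsQuark S {a, x} := hz'.1 _ haxz'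
  have hby : IsQuark S {b, y} := hz'.1 _ hbyz'
  have hx_mem : x ∈ X := (mem_X_of_mem hz' haxz') (by simp)
  have hxa : IsQuark S {x, a} := by rwa [Finset.pair_comm] at hax
  obtain ⟨u, hu_ne, hxu⟩ := cover_pair hq hz.1 hz.2.1 hxa nxa hx_mem
  have hxuq : IsQuark S {x, u} := hz.1 _ hxu
  have hua : u ≠ a := by
    rintro rfl
    have h := hpriv _ hxu (by simp)
    rw [pair_eq_pair_iff'] at h
    tauto
  by_cases hub : u = b
  · subst hub
    exact no_triangle hcond hax hxuq (by rwa [Finset.pair_comm] at hab)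
      nxa.symm nxb nab.symm
  by_cases huy : u = y
  · subst huy
    exact no_square hcond hax hxuq
      (by rwa [Finset.pair_comm] at hby) (by rwa [Finset.pair_comm] at hab)
      nxa.symm nya.symm nab nxy nxb nyb
  · exact no_path4 hcond (by rwa [Finset.pair_comm] at hxuq) hxa hab hby
      hu_ne hua hub huy nxa nxb nxy nab nya.symm nyb.symm

lemma fact_subset (hq : ∀ A, IsQuark S A → A.card ≤ 2)
    (hcond : ∀ C : (pairingGraph S).ConnectedComponent,
      CompAcyclic (pairingGraph S) C ∧ CompDiamLe (pairingGraph S) C 3)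
    {X : Finset ℕ} {z z' : Finset (Finset ℕ)}
    (hz : IsFactorization S X z) (hz' : IsFactorization S X z') : z ⊆ z' := by
  intro A hA
  have hAq := hz.1 A hA
  rcases card_le_two_cases A (hq A hAq) hAq.2.1 with ⟨a, rfl⟩ | ⟨a, b, nab, rfl⟩
  · exact singleton_forced hq hz' hAq ((mem_X_of_mem hz hA) (by simp))
  · by_contra hA'
    have ha : a ∈ X := (mem_X_of_mem hz hA) (by simp)
    have hb : b ∈ X := (mem_X_of_mem hz hA) (by simp)
    have hAq' : IsQuark S {b, a} := by rwa [Finset.pair_comm] at hAq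
    obtain ⟨x, nxa, haxz'⟩ := cover_pair hq hz'.1 hz'.2.1 hAq nab ha
    obtain ⟨y, nyb, hbyz'⟩ := cover_pair hq hz'.1 hz'.2.1 hAq' nab.symm hb
    have nxb : x ≠ b := by
      rintro rfl; exact hA' haxz'
    have nya : y ≠ a := by
      rintro rfl; rw [Finset.pair_comm] at hbyz'; exact hA' hbyz'
    by_cases hxy : x = y
    · subst hxy
      have hq1 := hz'.1 _ hbyz'
      have hq2 := hz'.1 _ haxz'
      exact no_triangle hcond hAq hq1 (by rwa [Finset.pair_comm] at hq2) nab nxb.symm nxa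
    · have hmin := hz.2.2 (z.erase {a, b}) (Finset.erase_ssubset hA)
      have hpriv : (∀ Q ∈ z, a ∈ Q → Q = {a, b}) ∨ (∀ Q ∈ z, b ∈ Q → Q = {a, b}) := by
        by_contra hcon
        push_neg at hcon
        obtain ⟨⟨Qa, hQa, haQa, hQa'⟩, ⟨Qb, hQb, hbQb, hQb'⟩⟩ := hcon
        apply hmin
        apply le_antisymm
        · rw [← hz.2.1]
          exact Finset.sup_mono (Finset.erase_subset _ _)
        · intro v hv
          rw [← hz.2.1] at hv
          obtain ⟨Q, hQ, hvQ⟩ := Finset.mem_sup.mp hv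
          by_cases hQeq : Q = {a, b}
          · subst hQeq
            simp only [id, Finset.mem_insert, Finset.mem_singleton] at hvQ
            rcases hvQ with rfl | rfl
            · exact Finset.mem_sup.mpr ⟨Qa, Finset.mem_erase.mpr ⟨hQa', hQa⟩, haQa⟩
            · exact Finset.mem_sup.mpr ⟨Qb, Finset.mem_erase.mpr ⟨hQb', hQb⟩, hbQb⟩
          · exact Finset.mem_sup.mpr ⟨Q, Finset.mem_erase.mpr ⟨hQeq, hQ⟩, hvQ⟩
      rcases hpriv with hp | hp
      · exact core_priv hq hcond hz hz' hA haxz' hbyz' nab nxa nxb nyb nya hxy hp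
      · refine core_priv hq hcond hz hz' (Finset.pair_comm a b ▸ hA) hbyz' haxz'
          nab.symm nyb nya nxa nxb (Ne.symm hxy) ?_
        intro Q hQ hbQ
        exact (hp Q hQ hbQ).trans (Finset.pair_comm a b)

lemma cond_imp_ufs (hfac : Factorizable S) (hq : ∀ A, IsQuark S A → A.card ≤ 2)
    (hcond : ∀ C : (pairingGraph S).ConnectedComponent,
      CompAcyclic (pairingGraph S) C ∧ CompDiamLe (pairingGraph S) C 3) : IsUFS S := by
  intro X hX hX0
  obtain ⟨z, hz⟩ := hfac X hX hX0
  exact ⟨z, hz, fun z' hz' =>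
    Finset.Subset.antisymm (fact_subset hq hcond hz' hz) (fact_subset hq hcond hz hz')⟩

theorem main_iff (hS : IsBSL S) (hfac : Factorizable S)
    (hq : ∀ A, IsQuark S A → A.card ≤ 2) :
    IsUFS S ↔ ∀ C : (pairingGraph S).ConnectedComponent,
      CompAcyclic (pairingGraph S) C ∧ CompDiamLe (pairingGraph S) C 3 :=
  ⟨ufs_imp_cond hS, cond_imp_ufs hfac hq⟩

end Stmt9
namespace Stmt9

open SimpleGraph

/-- Explicit description of the generated Boolean sublattice (an upper bound for it). -/
def genSet (𝒜 : Set (Finset ℕ)) : Set (Finset ℕ) :=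
  {X | X = ∅ ∨ ∃ F : Finset (Finset ℕ), (↑F : Set (Finset ℕ)) ⊆ 𝒜 ∧ F.Nonempty ∧ F.sup id = X}

lemma genBSL_isBSL (𝒜 : Set (Finset ℕ)) : IsBSL (genBSL 𝒜) := by
  constructor
  · intro T hT
    exact hT.1.1
  · intro A hA B hB T hT
    exact hT.1.2 A (hA T hT) B (hB T hT)

lemma subset_genBSL (𝒜 : Set (Finset ℕ)) : 𝒜 ⊆ genBSL 𝒜 := by
  intro A hA T hT
  exact hT.2 hA

lemma genSet_isBSL (𝒜 : Set (Finset ℕ)) : IsBSL (genSet 𝒜) := by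
  constructor
  · exact Or.inl rfl
  · rintro A (rfl | ⟨F, hF1, hF2, rfl⟩) B hB
    · simpa using hB
    · rcases hB with rfl | ⟨F', hF'1, hF'2, rfl⟩
      · exact Or.inr ⟨F, hF1, hF2, by simp⟩
      · refine Or.inr ⟨F ∪ F', ?_, hF2.mono Finset.subset_union_left, ?_⟩
        · rw [Finset.coe_union]
          exact Set.union_subset hF1 hF'1
        · rw [Finset.sup_union, Finset.sup_eq_union]

lemma genBSL_subset_genSet (𝒜 : Set (Finset ℕ)) : genBSL 𝒜 ⊆ genSet 𝒜 := by
  apply Set.sInter_subset_of_mem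
  refine ⟨genSet_isBSL 𝒜, ?_⟩
  intro A hA
  exact Or.inr ⟨{A}, by simpa using hA, Finset.singleton_nonempty A, Finset.sup_singleton⟩

lemma exists_edge_subset {𝒜 : Set (Finset ℕ)} {A : Finset ℕ} (hA : A ∈ genBSL 𝒜)
    (hA0 : A ≠ ∅) : ∃ e ∈ 𝒜, e ⊆ A := by
  rcases genBSL_subset_genSet 𝒜 hA with rfl | ⟨F, hF1, hF2, rfl⟩
  · exact absurd rfl hA0
  · obtain ⟨f, hf⟩ := hF2
    exact ⟨f, hF1 hf, Finset.le_sup (f := id) hf⟩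

section Comp

variable {S : Set (Finset ℕ)} {C : (pairingGraph S).ConnectedComponent}

lemma compEdge_card {A : Finset ℕ} (hA : A ∈ compEdgeSets S C) : A.card = 2 := by
  obtain ⟨a, b, hadj, _, rfl⟩ := hA
  exact pair_card a b hadj.ne

lemma quark_genBSL_iff {A : Finset ℕ} :
    IsQuark (genBSL (compEdgeSets S C)) A ↔ A ∈ compEdgeSets S C := by
  constructor
  · intro hA
    obtain ⟨e, he, hesub⟩ := exists_edge_subset hA.1 hA.2.1
    have he0 : e ≠ ∅ := by
      intro h
      have := compEdge_card he
      rw [h] at this; simp at this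
    have : e = A := by
      by_contra hne
      exact hA.2.2 e (subset_genBSL _ he) he0 (hesub.ssubset_of_ne hne)
    exact this ▸ he
  · intro hA
    refine ⟨subset_genBSL _ hA, ?_, ?_⟩
    · intro h
      have := compEdge_card hA
      rw [h] at this; simp at this
    · intro B hB hB0 hBA
      obtain ⟨e, he, hesub⟩ := exists_edge_subset hB hB0
      have h1 : 2 ≤ B.card := (compEdge_card he) ▸ Finset.card_le_card hesub
      have h2 : B.card < A.card := Finset.card_lt_card hBA
      rw [compEdge_card hA] at h2
      omega

lemma genBSL_factorizable : Factorizable (genBSL (compEdgeSets S C)) := by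
  intro X hX hX0
  rcases genBSL_subset_genSet _ hX with rfl | ⟨F, hF1, hF2, hF3⟩
  · exact absurd rfl hX0
  · obtain ⟨z, hz1, hz2, hz3⟩ := exists_min_cover X F hF3
    refine ⟨z, ?_, hz2, hz3⟩
    intro A hA
    exact quark_genBSL_iff.mpr (hF1 (hz1 hA))

lemma genBSL_quark_card {A : Finset ℕ} (hA : IsQuark (genBSL (compEdgeSets S C)) A) :
    A.card ≤ 2 :=
  le_of_eq (compEdge_card (quark_genBSL_iff.mp hA))

lemma adj_comp_iff {a b : ℕ} (hadj : (pairingGraph S).Adj a b) :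
    (a ∈ C.supp ↔ b ∈ C.supp) := by
  simp only [SimpleGraph.ConnectedComponent.mem_supp_iff]
  rw [SimpleGraph.ConnectedComponent.connectedComponentMk_eq_of_adj hadj]

lemma pair_mem_compEdgeSets_iff {a b : ℕ} :
    ({a, b} : Finset ℕ) ∈ compEdgeSets S C ↔ (pairingGraph S).Adj a b ∧ a ∈ C.supp := by
  constructor
  · rintro ⟨a', b', hadj, ha', heq⟩
    rw [pair_eq_pair_iff'] at heq
    rcases heq with ⟨rfl, rfl⟩ | ⟨rfl, rfl⟩
    · exact ⟨hadj, ha'⟩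
    · exact ⟨hadj.symm, (adj_comp_iff hadj).mp ha'⟩
  · rintro ⟨hadj, ha⟩
    exact ⟨a, b, hadj, ha, rfl⟩

lemma adj_genBSL_iff {a b : ℕ} :
    (pairingGraph (genBSL (compEdgeSets S C))).Adj a b ↔
      (pairingGraph S).Adj a b ∧ a ∈ C.supp := by
  rw [show pairingGraph (genBSL (compEdgeSets S C)) =
    SimpleGraph.fromRel (fun a b => IsQuark (genBSL (compEdgeSets S C)) {a, b}) from rfl,
    SimpleGraph.fromRel_adj]
  constructor
  · rintro ⟨hne, h | h⟩
    · rw [quark_genBSL_iff, pair_mem_compEdgeSets_iff] at h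
      exact h
    · rw [quark_genBSL_iff, pair_mem_compEdgeSets_iff] at h
      exact ⟨h.1.symm, (adj_comp_iff h.1.symm).mpr h.2⟩
  · rintro ⟨hadj, ha⟩
    exact ⟨hadj.ne, Or.inl (quark_genBSL_iff.mpr (pair_mem_compEdgeSets_iff.mpr ⟨hadj, ha⟩))⟩

end Comp

end Stmt9
namespace Stmt9

open SimpleGraph

lemma supp_of_mem_support {V : Type*} [DecidableEq V] {G : SimpleGraph V} {C : G.ConnectedComponent}
    {u w : V} (hu : u ∈ C.supp) (p : G.Walk u w) {v : V} (hv : v ∈ p.support) :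
    v ∈ C.supp := by
  rw [SimpleGraph.ConnectedComponent.mem_supp_iff] at hu ⊢
  rw [← hu]
  exact SimpleGraph.ConnectedComponent.sound ⟨(p.takeUntil v hv).reverse⟩

section Transfer

variable {S : Set (Finset ℕ)} {C : (pairingGraph S).ConnectedComponent}

lemma edges_up {u w : ℕ} (p : (pairingGraph (genBSL (compEdgeSets S C))).Walk u w) :
    ∀ e ∈ p.edges, e ∈ (pairingGraph S).edgeSet := by
  intro e he
  induction e with
  | h x y =>
    rw [SimpleGraph.mem_edgeSet]
    exact (adj_genBSL_iff.mp (p.adj_of_mem_edges he)).1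

lemma edges_down {u w : ℕ} (hu : u ∈ C.supp) (p : (pairingGraph S).Walk u w) :
    ∀ e ∈ p.edges, e ∈ (pairingGraph (genBSL (compEdgeSets S C))).edgeSet := by
  intro e he
  induction e with
  | h x y =>
    rw [SimpleGraph.mem_edgeSet, adj_genBSL_iff]
    exact ⟨p.adj_of_mem_edges he,
      supp_of_mem_support hu p (p.fst_mem_support_of_mem_edges he)⟩

lemma cond_down
    (hcondS : ∀ C' : (pairingGraph S).ConnectedComponent,
      CompAcyclic (pairingGraph S) C' ∧ CompDiamLe (pairingGraph S) C' 3) :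
    ∀ D : (pairingGraph (genBSL (compEdgeSets S C))).ConnectedComponent,
      CompAcyclic (pairingGraph (genBSL (compEdgeSets S C))) D ∧
      CompDiamLe (pairingGraph (genBSL (compEdgeSets S C))) D 3 := by
  intro D
  constructor
  · intro v _ c hc
    exact (hcondS ((pairingGraph S).connectedComponentMk v)).1 v (self_mem_supp v)
      (c.transfer _ (edges_up c)) (hc.transfer (edges_up c))
  · intro u w _ p hp
    have := (hcondS ((pairingGraph S).connectedComponentMk u)).2 u w (self_mem_supp u)
      (p.transfer _ (edges_up p)) (hp.transfer (edges_up p))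
    rwa [SimpleGraph.Walk.length_transfer] at this

lemma cond_up
    (h : ∀ C' : (pairingGraph S).ConnectedComponent,
      ∀ D : (pairingGraph (genBSL (compEdgeSets S C'))).ConnectedComponent,
        CompAcyclic (pairingGraph (genBSL (compEdgeSets S C'))) D ∧
        CompDiamLe (pairingGraph (genBSL (compEdgeSets S C'))) D 3) :
    ∀ C' : (pairingGraph S).ConnectedComponent,
      CompAcyclic (pairingGraph S) C' ∧ CompDiamLe (pairingGraph S) C' 3 := by
  intro C'
  constructor
  · intro v hv c hc
    exact (h C' ((pairingGraph (genBSL (compEdgeSets S C'))).connectedComponentMk v)).1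
      v (self_mem_supp v) (c.transfer _ (edges_down hv c)) (hc.transfer (edges_down hv c))
  · intro u w hu p hp
    have := (h C' ((pairingGraph (genBSL (compEdgeSets S C'))).connectedComponentMk u)).2
      u w (self_mem_supp u) (p.transfer _ (edges_down hu p)) (hp.transfer (edges_down hu p))
    rwa [SimpleGraph.Walk.length_transfer] at this

end Transfer

end Stmt9

/-- For a factorizable Boolean sublattice `S` whose quarks have size at
most 2, the following are equivalent: (a) `S` is a UFS; (b) for each connected
component `C` of the pairing graph, the Boolean sublattice generated by the edge set
of `C` is a UFS; (c) each connected component of the pairing graph is a tree with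
diameter at most 3. -/
theorem stmt_9 (S : Set (Finset ℕ)) (hS : IsBSL S) (hfac : Factorizable S)
    (hq : ∀ A : Finset ℕ, IsQuark S A → A.card ≤ 2) :
    (IsUFS S ↔
      ∀ C : (pairingGraph S).ConnectedComponent, IsUFS (genBSL (compEdgeSets S C))) ∧
    (IsUFS S ↔
      ∀ C : (pairingGraph S).ConnectedComponent,
        CompAcyclic (pairingGraph S) C ∧ CompDiamLe (pairingGraph S) C 3) := by
  have main := Stmt9.main_iff hS hfac hq
  have mainC : ∀ C : (pairingGraph S).ConnectedComponent,
      IsUFS (genBSL (compEdgeSets S C)) ↔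
        ∀ D : (pairingGraph (genBSL (compEdgeSets S C))).ConnectedComponent,
          CompAcyclic (pairingGraph (genBSL (compEdgeSets S C))) D ∧
          CompDiamLe (pairingGraph (genBSL (compEdgeSets S C))) D 3 :=
    fun C => Stmt9.main_iff (Stmt9.genBSL_isBSL _) Stmt9.genBSL_factorizable
      (fun A hA => Stmt9.genBSL_quark_card hA)
  refine ⟨?_, main⟩
  rw [main]
  constructor
  · intro hcondS C
    rw [mainC C]
    exact Stmt9.cond_down hcondS
  · intro h
    exact Stmt9.cond_up (fun C => (mainC C).mp (h C))
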